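/- Let N ≥ 5 and a₁ ∈ ℝ. The function Φ₁(x) = (1/(4(N−4))) (x_N+1)/(|x̄|² + (x_N+1)²)^{(N−4)/2} + a₁ (x_N+1)/(|x̄|² + (x_N+1)²)^{N/2} satisfies −ΔΦ₁(x) = (x_N+1)/(|x̄|² + (x_N+1)²)^{(N−2)/2} for all x ∈ ℝ^N_+. -/

import Mathlib

open MeasureTheory Filter Topology

noncomputable section

/-- The model for `ℝ^N_+`: pairs `(x̄, t)` with `x̄ ∈ ℝ^n` (Euclidean) and `t ∈ ℝ`;
the open upper half-space is `{p | 0 < p.2}`. -/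
abbrev HSp (n : ℕ) := EuclideanSpace ℝ (Fin n) × ℝ

/-- The open upper half-space. -/
def upperHalf (n : ℕ) : Set (HSp n) := {p | 0 < p.2}

/-- Directional derivative of `f` at `x` in direction `v`. -/
def pdv {n : ℕ} (v : HSp n) (f : HSp n → ℝ) (x : HSp n) : ℝ := fderiv ℝ f x v

/-- The `i`-th horizontal standard basis vector. -/
def eH {n : ℕ} (i : Fin n) : HSp n := (EuclideanSpace.single i 1, 0)

/-- The vertical standard basis vector. -/
def eV {n : ℕ} : HSp n := (0, 1)

/-- The Laplacian `Δf = ∑ᵢ ∂ᵢᵢ f + ∂_NN f`. -/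
def lap {n : ℕ} (f : HSp n → ℝ) (x : HSp n) : ℝ :=
  (∑ i : Fin n, pdv (eH i) (pdv (eH i) f) x) + pdv eV (pdv eV f) x

/-- The Euclidean length `|x|` of a point `x = (x̄, t)`. -/
def rad {n : ℕ} (x : HSp n) : ℝ := Real.sqrt (‖x.1‖ ^ 2 + x.2 ^ 2)

/-- The bubble `W_{λ,ξ}`. -/
def Bub (N : ℕ) (lam : ℝ) (ξ : EuclideanSpace ℝ (Fin (N - 1))) (x : HSp (N - 1)) : ℝ :=
  lam ^ (((N : ℝ) - 2) / 2) / (‖x.1 - ξ‖ ^ 2 + (x.2 + lam) ^ 2) ^ (((N : ℝ) - 2) / 2)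

/-- The trace `w_{λ,ξ}` of the bubble on the boundary. -/
def bub (N : ℕ) (lam : ℝ) (ξ y : EuclideanSpace ℝ (Fin (N - 1))) : ℝ := Bub N lam ξ (y, 0)

/-! ### Auxiliary machinery -/

variable {n : ℕ}

def PJ (i : Fin n) : HSp n →L[ℝ] ℝ :=
  (EuclideanSpace.proj i).comp (ContinuousLinearMap.fst ℝ _ _)
def SN : HSp n →L[ℝ] ℝ := ContinuousLinearMap.snd ℝ _ _

def sfun (y : HSp n) : ℝ := ‖y.1‖ ^ 2 + (y.2 + 1) ^ 2

def sL (x : HSp n) : HSp n →L[ℝ] ℝ :=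
  (∑ i, (2 * x.1 i) • PJ i) + (2 * (x.2 + 1)) • SN

lemma PJ_apply (i : Fin n) (v : HSp n) : PJ i v = v.1 i := rfl
lemma SN_apply (v : HSp n) : SN v = v.2 := rfl

lemma PJ_eH (i : Fin n) : PJ i (eH i) = 1 := by
  simp [PJ_apply, eH]
lemma PJ_eV (i : Fin n) : PJ i (eV : HSp n) = 0 := rfl
lemma SN_eH (i : Fin n) : SN (eH i : HSp n) = 0 := rfl
lemma SN_eV : SN (eV : HSp n) = 1 := rfl

lemma sL_apply (x v : HSp n) : sL x v = (∑ i, 2 * x.1 i * v.1 i) + 2 * (x.2+1) * v.2 := by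
  simp [sL, PJ_apply, SN_apply, mul_assoc]

lemma sL_eH (x : HSp n) (i : Fin n) : sL x (eH i) = 2 * x.1 i := by
  simp [sL_apply, eH, EuclideanSpace.single_apply]

lemma sL_eV (x : HSp n) : sL x eV = 2 * (x.2 + 1) := by
  simp [sL_apply, eV]

lemma sfun_eq (y : HSp n) : sfun y = (∑ i, (y.1 i)^2) + (y.2+1)^2 := by
  have : ‖y.1‖ ^ 2 = ∑ i, (y.1 i)^2 := by
    rw [EuclideanSpace.norm_eq, Real.sq_sqrt (by positivity)]
    simp [sq_abs]
  rw [sfun, this]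

lemma sfun_pos (y : HSp n) (hy : -1 < y.2) : 0 < sfun y := by
  have : 0 < (y.2 + 1)^2 := by nlinarith
  have h2 : (0:ℝ) ≤ ‖y.1‖^2 := by positivity
  unfold sfun; linarith

lemma hasFDerivAt_sfun (x : HSp n) : HasFDerivAt sfun (sL x) x := by
  have hPJ : ∀ i : Fin n, HasFDerivAt (fun y : HSp n => y.1 i) (PJ i) x :=
    fun i => (PJ i).hasFDerivAt
  have hSN : HasFDerivAt (fun y : HSp n => y.2 + 1) SN x := SN.hasFDerivAt.add_const 1
  have h : HasFDerivAt (fun y : HSp n => (∑ i, (y.1 i)^2) + (y.2+1)^2)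
      ((∑ i : Fin n, ((x.1 i) • (PJ i) + (x.1 i) • (PJ i))) +
        ((x.2+1) • SN + (x.2+1) • SN)) x := by
    apply HasFDerivAt.add
    · exact HasFDerivAt.fun_sum fun i _ => by simpa [sq] using (hPJ i).fun_mul (hPJ i)
    · simpa [sq] using hSN.fun_mul hSN
  have he : sfun = fun y : HSp n => (∑ i, (y.1 i)^2) + (y.2+1)^2 := funext sfun_eq
  rw [he]
  convert h using 1
  refine ContinuousLinearMap.ext fun v => ?_
  simp [sL_apply, PJ_apply, SN_apply, Finset.sum_add_distrib]
  rw [Finset.sum_congr rfl fun i _ => mul_assoc 2 (x.1 i) (v.1 i), ← Finset.mul_sum]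
  ring

/-- `G c y = (y₂+1) (|ȳ|² + (y₂+1)²)^c`. -/
def Gf (c : ℝ) (y : HSp n) : ℝ := (y.2 + 1) * sfun y ^ c

/-- first horizontal derivative of `Gf c`. -/
def FH (c : ℝ) (i : Fin n) (y : HSp n) : ℝ :=
  (y.2 + 1) * (c * sfun y ^ (c - 1)) * (2 * y.1 i)

/-- first vertical derivative of `Gf c`. -/
def FV (c : ℝ) (y : HSp n) : ℝ :=
  (y.2 + 1) * (c * sfun y ^ (c - 1)) * (2 * (y.2 + 1)) + sfun y ^ c

lemma hasG (c : ℝ) (x : HSp n) (hx : sfun x ≠ 0) :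
    HasFDerivAt (Gf c)
      ((x.2+1) • ((c * sfun x ^ (c-1)) • sL x) + (sfun x ^ c) • SN) x := by
  have ht : HasFDerivAt (fun y : HSp n => y.2 + 1) SN x := SN.hasFDerivAt.add_const 1
  have hq := (hasFDerivAt_sfun x).rpow_const (p := c) (Or.inl hx)
  exact ht.mul hq

lemma hasFH (c : ℝ) (i : Fin n) (x : HSp n) (hx : sfun x ≠ 0) :
    HasFDerivAt (FH c i)
      (((x.2+1) * (c * sfun x ^ (c-1))) • ((2:ℝ) • PJ i) +
        (2 * x.1 i) • ((x.2+1) • (c • (((c-1) * sfun x ^ (c-1-1)) • sL x)) +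
          (c * sfun x ^ (c-1)) • SN)) x := by
  have ht : HasFDerivAt (fun y : HSp n => y.2 + 1) SN x := SN.hasFDerivAt.add_const 1
  have hq := ((hasFDerivAt_sfun x).rpow_const (p := c - 1) (Or.inl hx)).const_mul c
  have h1 := ht.mul hq
  have h2 : HasFDerivAt (fun y : HSp n => 2 * y.1 i) ((2:ℝ) • PJ i) x :=
    (PJ i).hasFDerivAt.const_mul 2
  exact h1.mul h2

lemma hasFV (c : ℝ) (x : HSp n) (hx : sfun x ≠ 0) :
    HasFDerivAt (FV c)
      ((((x.2+1) * (c * sfun x ^ (c-1))) • ((2:ℝ) • SN) +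
        (2 * (x.2+1)) • ((x.2+1) • (c • (((c-1) * sfun x ^ (c-1-1)) • sL x)) +
          (c * sfun x ^ (c-1)) • SN)) +
        (c * sfun x ^ (c-1)) • sL x) x := by
  have ht : HasFDerivAt (fun y : HSp n => y.2 + 1) SN x := SN.hasFDerivAt.add_const 1
  have hq := ((hasFDerivAt_sfun x).rpow_const (p := c - 1) (Or.inl hx)).const_mul c
  have h1 := ht.mul hq
  have h2 : HasFDerivAt (fun y : HSp n => 2 * (y.2 + 1)) ((2:ℝ) • SN) x :=
    ht.const_mul 2
  have h3 := (hasFDerivAt_sfun x).rpow_const (p := c) (Or.inl hx)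
  exact (h1.mul h2).add h3

/-! ### First derivatives of the combination -/

section comb
variable (k a c₁ c₂ : ℝ)

lemma hasComb (x : HSp n) (hx : sfun x ≠ 0) :
    HasFDerivAt (fun y : HSp n => k * Gf c₁ y + a * Gf c₂ y)
      (k • ((x.2+1) • ((c₁ * sfun x ^ (c₁-1)) • sL x) + (sfun x ^ c₁) • SN) +
       a • ((x.2+1) • ((c₂ * sfun x ^ (c₂-1)) • sL x) + (sfun x ^ c₂) • SN)) x :=
  ((hasG c₁ x hx).const_mul k).add ((hasG c₂ x hx).const_mul a)

lemma pdv_comb_eH (i : Fin n) (y : HSp n) (hy : sfun y ≠ 0) :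
    pdv (eH i) (fun y : HSp n => k * Gf c₁ y + a * Gf c₂ y) y =
      k * FH c₁ i y + a * FH c₂ i y := by
  rw [pdv, (hasComb k a c₁ c₂ y hy).fderiv]
  simp [FH, sL_eH, SN_eH]
  ring

lemma pdv_comb_eV (y : HSp n) (hy : sfun y ≠ 0) :
    pdv eV (fun y : HSp n => k * Gf c₁ y + a * Gf c₂ y) y =
      k * FV c₁ y + a * FV c₂ y := by
  rw [pdv, (hasComb k a c₁ c₂ y hy).fderiv]
  simp [FV, sL_eV, SN_eV]
  ring

lemma isOpen_U : IsOpen {y : HSp n | -1 < y.2} :=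
  isOpen_lt continuous_const continuous_snd

lemma pdv2_comb_eH (i : Fin n) (x : HSp n) (hx : -1 < x.2) :
    pdv (eH i) (pdv (eH i) (fun y : HSp n => k * Gf c₁ y + a * Gf c₂ y)) x =
      k * ((x.2+1) * (c₁ * (c₁-1) * sfun x ^ (c₁-1-1)) * (2 * x.1 i) * (2 * x.1 i)
            + (x.2+1) * (c₁ * sfun x ^ (c₁-1)) * 2)
      + a * ((x.2+1) * (c₂ * (c₂-1) * sfun x ^ (c₂-1-1)) * (2 * x.1 i) * (2 * x.1 i)
            + (x.2+1) * (c₂ * sfun x ^ (c₂-1)) * 2) := by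
  have hxs := (sfun_pos x hx).ne'
  have heq : pdv (eH i) (fun y : HSp n => k * Gf c₁ y + a * Gf c₂ y)
      =ᶠ[𝓝 x] fun y => k * FH c₁ i y + a * FH c₂ i y := by
    filter_upwards [isOpen_U.mem_nhds hx] with y hy
    exact pdv_comb_eH k a c₁ c₂ i y (sfun_pos y hy).ne'
  rw [pdv, heq.fderiv_eq,
    (((hasFH c₁ i x hxs).const_mul k).fun_add ((hasFH c₂ i x hxs).const_mul a)).fderiv]
  simp [sL_eH, SN_eH, PJ_eH]
  ring

lemma pdv2_comb_eV (x : HSp n) (hx : -1 < x.2) :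
    pdv eV (pdv eV (fun y : HSp n => k * Gf c₁ y + a * Gf c₂ y)) x =
      k * ((x.2+1) * (c₁ * (c₁-1) * sfun x ^ (c₁-1-1)) * (2*(x.2+1)) * (2*(x.2+1))
            + 3 * (2 * (x.2+1)) * (c₁ * sfun x ^ (c₁-1)))
      + a * ((x.2+1) * (c₂ * (c₂-1) * sfun x ^ (c₂-1-1)) * (2*(x.2+1)) * (2*(x.2+1))
            + 3 * (2 * (x.2+1)) * (c₂ * sfun x ^ (c₂-1))) := by
  have hxs := (sfun_pos x hx).ne'
  have heq : pdv eV (fun y : HSp n => k * Gf c₁ y + a * Gf c₂ y)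
      =ᶠ[𝓝 x] fun y => k * FV c₁ y + a * FV c₂ y := by
    filter_upwards [isOpen_U.mem_nhds hx] with y hy
    exact pdv_comb_eV k a c₁ c₂ y (sfun_pos y hy).ne'
  rw [pdv, heq.fderiv_eq,
    (((hasFV c₁ x hxs).const_mul k).fun_add ((hasFV c₂ x hxs).const_mul a)).fderiv]
  simp [sL_eV, SN_eV]
  ring

lemma lap_comb (x : HSp n) (hx : -1 < x.2) :
    lap (fun y : HSp n => k * Gf c₁ y + a * Gf c₂ y) x =
      k * (2 * c₁ * (2 * c₁ + n + 1)) * (x.2+1) * sfun x ^ (c₁ - 1)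
      + a * (2 * c₂ * (2 * c₂ + n + 1)) * (x.2+1) * sfun x ^ (c₂ - 1) := by
  have hs := sfun_pos x hx
  have hsum : ∑ i, (x.1 i)^2 = sfun x - (x.2+1)^2 := by rw [sfun_eq]; ring
  have hr : ∀ c : ℝ, sfun x ^ (c-1-1) * sfun x = sfun x ^ (c-1) := by
    intro c
    rw [← Real.rpow_add_one hs.ne' (c-1-1)]
    norm_num
  have e1 : ∀ (K C D : ℝ), ∑ i : Fin n, K * (C * (2 * x.1 i) * (2 * x.1 i) + D)
      = K * C * 4 * (sfun x - (x.2+1)^2) + n * (K * D) := by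
    intro K C D
    rw [Finset.sum_congr rfl (fun i _ =>
      show K * (C * (2 * x.1 i) * (2 * x.1 i) + D) = (4*K*C) * (x.1 i)^2 + K*D by ring),
      Finset.sum_add_distrib, ← Finset.mul_sum, hsum, Finset.sum_const,
      Finset.card_univ, Fintype.card_fin, nsmul_eq_mul]
    ring
  rw [lap, pdv2_comb_eV k a c₁ c₂ x hx,
    Finset.sum_congr rfl fun i _ => pdv2_comb_eH k a c₁ c₂ i x hx]
  rw [Finset.sum_add_distrib, e1, e1, ← hr c₁, ← hr c₂]
  ring

end comb

/-- `-ΔΦ₁ = (x_N+1)/(|x̄|² + (x_N+1)²)^{(N-2)/2}` in the upper half-space. -/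
theorem Phi1_solves (N : ℕ) (hN : 5 ≤ N) (a₁ : ℝ) (Φ₁ : HSp (N - 1) → ℝ)
    (hΦ₁ : ∀ x : HSp (N - 1), Φ₁ x =
      1 / (4 * ((N : ℝ) - 4)) * (x.2 + 1)
          / (‖x.1‖ ^ 2 + (x.2 + 1) ^ 2) ^ (((N : ℝ) - 4) / 2)
        + a₁ * (x.2 + 1) / (‖x.1‖ ^ 2 + (x.2 + 1) ^ 2) ^ ((N : ℝ) / 2)) :
    ∀ x ∈ upperHalf (N - 1),
      -(lap Φ₁ x) = (x.2 + 1) / (‖x.1‖ ^ 2 + (x.2 + 1) ^ 2) ^ (((N : ℝ) - 2) / 2) := by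
  intro x hx
  have hx' : -(1:ℝ) < x.2 := lt_trans (by norm_num) hx
  set k : ℝ := 1 / (4 * ((N : ℝ) - 4)) with hk
  set c₁ : ℝ := -(((N : ℝ) - 4) / 2) with hc₁def
  set c₂ : ℝ := -((N : ℝ) / 2) with hc₂def
  have hNr : (5:ℝ) ≤ (N:ℝ) := by exact_mod_cast hN
  have hN4 : (N:ℝ) - 4 ≠ 0 := by linarith
  have h0 : (0:ℝ) ≤ sfun x := (sfun_pos x hx').le
  have hΦ : Φ₁ = fun y : HSp (N-1) => k * Gf c₁ y + a₁ * Gf c₂ y := by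
    funext y
    have h0y : (0:ℝ) ≤ ‖y.1‖ ^ 2 + (y.2 + 1) ^ 2 := by positivity
    rw [hΦ₁ y]
    show _ = k * ((y.2+1) * (‖y.1‖ ^ 2 + (y.2 + 1) ^ 2) ^ c₁)
        + a₁ * ((y.2+1) * (‖y.1‖ ^ 2 + (y.2 + 1) ^ 2) ^ c₂)
    rw [hc₁def, hc₂def, Real.rpow_neg h0y, Real.rpow_neg h0y]
    ring
  rw [hΦ, lap_comb k a₁ c₁ c₂ x hx']
  have hcast : ((N - 1 : ℕ):ℝ) = (N:ℝ) - 1 := by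
    rw [Nat.cast_sub (by omega)]; norm_num
  have hc2 : 2*c₂*(2*c₂ + ((N-1:ℕ):ℝ) + 1) = 0 := by
    rw [hcast, hc₂def]; ring
  have hc1 : k * (2*c₁*(2*c₁ + ((N-1:ℕ):ℝ) + 1)) = -1 := by
    rw [hcast, hc₁def, hk]; field_simp; ring
  have he : c₁ - 1 = -(((N:ℝ) - 2)/2) := by rw [hc₁def]; ring
  rw [hc2, hc1, he, show (‖x.1‖ ^ 2 + (x.2 + 1) ^ 2) = sfun x from rfl,
    Real.rpow_neg h0, div_eq_mul_inv]
  ring
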